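/- Let Γ be a finitely generated group with finite symmetric generating set Q and Z a uniformly recurrent subgroup of Γ. Then Z is generic if and only if for every R > 0 there exists S > 0 such that for every H ∈ Z and all x, y ∈ Γ/H with 0 < d(x,y) ≤ R, the rooted-labeled S-balls around x and around y are not isomorphic. -/

import Mathlib

/-- Conjugation action of a group on its subgroups: `g • H = gHg⁻¹`. -/
def conjSub {Γ : Type*} [Group Γ] (g : Γ) (H : Subgroup Γ) : Subgroup Γ :=
  Subgroup.map (MulAut.conj g).toMonoidHom H

/-- The Chabauty-type topology on `Sub(Γ)`: the topology induced from the product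
topology on `{0,1}^Γ` via `H ↦ (γ ↦ decide (γ ∈ H))`. -/
noncomputable instance chabauty {Γ : Type*} [Group Γ] : TopologicalSpace (Subgroup Γ) :=
  TopologicalSpace.induced
    (fun H (g : Γ) => @decide (g ∈ H) (Classical.dec _)) inferInstance

/-- A uniformly recurrent subgroup: a nonempty, closed, conjugation-invariant subset of
`Sub(Γ)` on which every conjugation orbit is dense. -/
structure IsURS {Γ : Type*} [Group Γ] (Z : Set (Subgroup Γ)) : Prop where
  nonempty : Z.Nonempty
  closed : IsClosed Z
  invariant : ∀ g : Γ, ∀ H ∈ Z, conjSub g H ∈ Z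
  minimal : ∀ H ∈ Z, ∀ K ∈ Z, K ∈ closure {L : Subgroup Γ | ∃ g : Γ, conjSub g H = L}

/-- The Schreier graph of a subgroup `H ≤ Γ` with respect to a generating set `Q`:
vertices are left cosets in `Γ/H`, and `x ~ y` iff some `s ∈ Q` moves one to the other. -/
def schreierGraph {Γ : Type*} [Group Γ] (Q : Finset Γ) (H : Subgroup Γ) :
    SimpleGraph (Γ ⧸ H) where
  Adj x y := x ≠ y ∧ ∃ s ∈ Q, s • x = y ∨ s • y = x
  symm := by
    constructor
    rintro x y ⟨hne, s, hs, h⟩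
    exact ⟨hne.symm, s, hs, h.symm⟩
  loopless := by constructor; rintro x ⟨hne, _⟩; exact hne rfl

/-- The `R`-ball around `x` in the Schreier graph of `H`. -/
def sBall {Γ : Type*} [Group Γ] (Q : Finset Γ) (H : Subgroup Γ) (R : ℕ) (x : Γ ⧸ H) :
    Set (Γ ⧸ H) :=
  {y | (schreierGraph Q H).Reachable x y ∧ (schreierGraph Q H).dist x y ≤ R}

/-- The rooted-labeled `R`-balls around `x ∈ Γ/H` and `y ∈ Γ/H'` are isomorphic:
there is a root-preserving bijection between them commuting with all generator labels. -/
def BallIso {Γ : Type*} [Group Γ] (Q : Finset Γ) (H H' : Subgroup Γ) (R : ℕ)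
    (x : Γ ⧸ H) (y : Γ ⧸ H') : Prop :=
  ∃ φ : (Γ ⧸ H) → (Γ ⧸ H'),
    Set.BijOn φ (sBall Q H R x) (sBall Q H' R y) ∧ φ x = y ∧
    ∀ s ∈ Q, ∀ u ∈ sBall Q H R x, ∀ v ∈ sBall Q H R x, (s • u = v ↔ s • φ u = φ v)


section Aux
variable {Γ : Type*} [Group Γ]

lemma mem_conjSub {a g : Γ} {H : Subgroup Γ} : g ∈ conjSub a H ↔ a⁻¹ * g * a ∈ H := by
  constructor
  · rintro ⟨h, hh, rfl⟩
    simpa [MulEquiv.toMonoidHom_eq_coe, MonoidHom.coe_coe, MulAut.conj_apply, mul_assoc] using hh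
  · intro h
    refine ⟨a⁻¹ * g * a, h, ?_⟩
    simp [MulAut.conj_apply, mul_assoc]

lemma conjSub_conjSub {a b : Γ} {H : Subgroup Γ} :
    conjSub a (conjSub b H) = conjSub (a * b) H := by
  ext g
  simp only [mem_conjSub]
  have e : b⁻¹ * (a⁻¹ * g * a) * b = (a * b)⁻¹ * g * (a * b) := by group
  rw [e]

/-- characteristic function used in the chabauty instance -/
noncomputable def subChar : Subgroup Γ → Γ → Bool :=
  fun H (g : Γ) => @decide (g ∈ H) (Classical.dec _)

lemma continuous_subChar : Continuous (subChar (Γ := Γ)) :=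
  continuous_induced_dom

lemma subChar_eq_true {H : Subgroup Γ} {g : Γ} : subChar H g = true ↔ g ∈ H :=
  ⟨fun h => @of_decide_eq_true _ (Classical.dec _) h,
   fun h => @decide_eq_true _ (Classical.dec _) h⟩

lemma subChar_eq_false {H : Subgroup Γ} {g : Γ} : subChar H g = false ↔ g ∉ H := by
  rw [← subChar_eq_true, Bool.not_eq_true]

lemma isClosed_evalSet (a : Γ) (b : Bool) : IsClosed {f : Γ → Bool | f a = b} := by
  have : {f : Γ → Bool | f a = b} = (fun f : Γ → Bool => f a) ⁻¹' {b} := rfl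
  rw [this]
  exact (isClosed_discrete {b}).preimage (continuous_apply a)

lemma isClosed_memSet (g : Γ) : IsClosed {H : Subgroup Γ | g ∈ H} := by
  have : {H : Subgroup Γ | g ∈ H} = subChar ⁻¹' {f : Γ → Bool | f g = true} := by
    ext H; simp [subChar_eq_true]
  rw [this]
  exact (isClosed_evalSet g true).preimage continuous_subChar

lemma isClosed_notMemSet (g : Γ) : IsClosed {H : Subgroup Γ | g ∉ H} := by
  have : {H : Subgroup Γ | g ∉ H} = subChar ⁻¹' {f : Γ → Bool | f g = false} := by
    ext H
    simp only [Set.mem_setOf_eq, Set.mem_preimage]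
    rw [← subChar_eq_false]
  rw [this]
  exact (isClosed_evalSet g false).preimage continuous_subChar

instance : CompactSpace (Subgroup Γ) := by
  have hemb : Topology.IsClosedEmbedding (subChar (Γ := Γ)) := by
    refine ⟨⟨⟨rfl⟩, ?_⟩, ?_⟩
    · intro H K h
      ext g
      rw [← subChar_eq_true, ← subChar_eq_true, h]
    · have : Set.range (subChar (Γ := Γ)) =
        {f : Γ → Bool | f 1 = true} ∩
        ((⋂ (a : Γ), ⋂ (b : Γ), ({f : Γ → Bool | f a = false} ∪ {f | f b = false} ∪
            {f | f (a * b) = true})) ∩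
          ⋂ (a : Γ), ({f : Γ → Bool | f a = false} ∪ {f | f a⁻¹ = true})) := by
        ext f
        constructor
        · rintro ⟨H, rfl⟩
          refine ⟨subChar_eq_true.2 H.one_mem, ?_, ?_⟩
          · refine Set.mem_iInter.2 fun a => Set.mem_iInter.2 fun b => ?_
            by_cases ha : a ∈ H
            · by_cases hb : b ∈ H
              · exact Or.inr (subChar_eq_true.2 (H.mul_mem ha hb))
              · exact Or.inl (Or.inr (subChar_eq_false.2 hb))
            · exact Or.inl (Or.inl (subChar_eq_false.2 ha))
          · refine Set.mem_iInter.2 fun a => ?_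
            by_cases ha : a ∈ H
            · exact Or.inr (subChar_eq_true.2 (H.inv_mem ha))
            · exact Or.inl (subChar_eq_false.2 ha)
        · rintro ⟨h1, hmul, hinv⟩
          refine ⟨{ carrier := {g | f g = true}
                    one_mem' := h1
                    mul_mem' := ?_
                    inv_mem' := ?_ }, ?_⟩
          · intro a b ha hb
            have := Set.mem_iInter.1 (Set.mem_iInter.1 hmul a) b
            have ha' : f a = true := ha
            have hb' : f b = true := hb
            rcases this with (h | h) | h
            · have : f a = false := h; rw [ha'] at this; simp at this
            · have : f b = false := h; rw [hb'] at this; simp at this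
            · exact h
          · intro a ha
            have ha' : f a = true := ha
            rcases Set.mem_iInter.1 hinv a with h | h
            · have : f a = false := h; rw [ha'] at this; simp at this
            · exact h
          · funext g
            by_cases h : f g = true
            · exact (@decide_eq_true _ (Classical.dec _) (show _ from h)).trans h.symm
            · have h' : f g = false := by rwa [Bool.not_eq_true] at h
              have hn : ¬ (f g = true) := h
              exact (@decide_eq_false _ (Classical.dec _) (show _ from hn)).trans h'.symm
      rw [this]
      refine (isClosed_evalSet 1 true).inter (IsClosed.inter ?_ ?_)
      · exact isClosed_iInter fun a => isClosed_iInter fun b =>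
          (((isClosed_evalSet a false).union (isClosed_evalSet b false)).union
            (isClosed_evalSet (a * b) true))
      · exact isClosed_iInter fun a =>
          ((isClosed_evalSet a false).union (isClosed_evalSet a⁻¹ true))
  exact hemb.compactSpace

end Aux

section Words
variable {Γ : Type*} [Group Γ]

def QWords (Q : Finset Γ) (n : ℕ) : Set Γ :=
  {g | ∃ l : List Γ, (∀ s ∈ l, s ∈ Q) ∧ l.length ≤ n ∧ l.prod = g}

lemma one_mem_QWords (Q : Finset Γ) (n : ℕ) : (1 : Γ) ∈ QWords Q n :=
  ⟨[], by simp, by simp, by simp⟩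

lemma QWords_mono (Q : Finset Γ) {m n : ℕ} (h : m ≤ n) : QWords Q m ⊆ QWords Q n := by
  rintro g ⟨l, hl, hlen, rfl⟩
  exact ⟨l, hl, hlen.trans h, rfl⟩

lemma QWords_finite (Q : Finset Γ) (n : ℕ) : (QWords Q n).Finite := by
  induction n with
  | zero =>
    refine Set.Finite.subset (Set.finite_singleton 1) ?_
    rintro g ⟨l, hl, hlen, rfl⟩
    rw [Nat.le_zero, List.length_eq_zero_iff] at hlen
    simp [hlen]
  | succ n ih =>
    refine Set.Finite.subset (ih.union ((Q.finite_toSet).biUnion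
      (fun s _ => ih.image (fun h => s * h)))) ?_
    rintro g ⟨l, hl, hlen, rfl⟩
    cases l with
    | nil => exact Or.inl (one_mem_QWords Q n)
    | cons s l =>
      refine Or.inr (Set.mem_biUnion (hl s (by simp)) ?_)
      refine ⟨l.prod, ⟨l, fun t ht => hl t (by simp [ht]), ?_, rfl⟩, by simp⟩
      simpa using Nat.succ_le_succ_iff.mp hlen

lemma exists_QWords (Q : Finset Γ) (hgen : Subgroup.closure (Q : Set Γ) = ⊤)
    (hsym : ∀ s ∈ Q, s⁻¹ ∈ Q) (g : Γ) : ∃ n, g ∈ QWords Q n := by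
  have hg : g ∈ Subgroup.closure (Q : Set Γ) := by rw [hgen]; trivial
  induction hg using Subgroup.closure_induction with
  | mem s hs => exact ⟨1, [s], by simpa using hs, by simp, by simp⟩
  | one => exact ⟨0, one_mem_QWords Q 0⟩
  | mul a b _ _ iha ihb =>
    obtain ⟨m, la, hla, hlena, rfl⟩ := iha
    obtain ⟨n, lb, hlb, hlenb, rfl⟩ := ihb
    refine ⟨m + n, la ++ lb, ?_, ?_, by simp⟩
    · intro s hs; rcases List.mem_append.1 hs with h | h
      · exact hla s h
      · exact hlb s h
    · simpa using Nat.add_le_add hlena hlenb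
  | inv a _ iha =>
    obtain ⟨m, la, hla, hlena, rfl⟩ := iha
    refine ⟨m, (la.map (fun x => x⁻¹)).reverse, ?_, by simpa using hlena,
      (List.prod_inv_reverse la).symm⟩
    intro s hs
    rw [List.mem_reverse, List.mem_map] at hs
    obtain ⟨t, ht, rfl⟩ := hs
    exact hsym t (hla t ht)

end Words

section Graph
variable {Γ : Type*} [Group Γ] (Q : Finset Γ) (H : Subgroup Γ)

lemma walk_of_list (l : List Γ) (hl : ∀ s ∈ l, s ∈ Q) (x : Γ ⧸ H) :
    ∃ p : (schreierGraph Q H).Walk x (l.prod • x), p.length ≤ l.length := by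
  induction l with
  | nil =>
    refine ⟨SimpleGraph.Walk.nil.copy rfl (by rw [List.prod_nil, one_smul]), ?_⟩
    rw [SimpleGraph.Walk.length_copy]; simp
  | cons s l ih =>
    obtain ⟨p, hp⟩ := ih (fun t ht => hl t (by simp [ht]))
    have hend : s • (l.prod • x) = (s :: l).prod • x := by
      rw [List.prod_cons, mul_smul]
    by_cases h : s • (l.prod • x) = l.prod • x
    · refine ⟨p.copy rfl (by rw [← hend, h]), ?_⟩
      rw [SimpleGraph.Walk.length_copy]
      exact hp.trans (by simp)
    · have hadj : (schreierGraph Q H).Adj (l.prod • x) (s • (l.prod • x)) :=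
        ⟨fun e => h e.symm, s, hl s (by simp), Or.inl rfl⟩
      refine ⟨(p.concat hadj).copy rfl hend, ?_⟩
      rw [SimpleGraph.Walk.length_copy, SimpleGraph.Walk.length_concat]
      simpa using hp
  
lemma list_of_walk (hsym : ∀ s ∈ Q, s⁻¹ ∈ Q) {x y : Γ ⧸ H}
    (p : (schreierGraph Q H).Walk x y) :
    ∃ l : List Γ, (∀ s ∈ l, s ∈ Q) ∧ l.length ≤ p.length ∧ l.prod • x = y := by
  induction p with
  | nil => exact ⟨[], by simp, by simp, by simp⟩
  | @cons x u y h p ih =>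
    obtain ⟨l, hl, hlen, hprod⟩ := ih
    simp only [SimpleGraph.Walk.length_cons]
    obtain ⟨hne, s, hs, hcase⟩ := h
    have main : ∀ t : Γ, t ∈ Q → t • x = u →
        ∃ l' : List Γ, (∀ s ∈ l', s ∈ Q) ∧ l'.length ≤ p.length + 1 ∧ l'.prod • x = y := by
      intro t ht hte
      refine ⟨l ++ [t], ?_, ?_, ?_⟩
      · intro r hr
        rcases List.mem_append.1 hr with h' | h'
        · exact hl r h'
        · simp at h'; subst h'; exact ht
      · simpa using hlen
      · rw [List.prod_append, List.prod_singleton, mul_smul, hte, hprod]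
    rcases hcase with he | he
    · exact main s hs he
    · refine main s⁻¹ (hsym s hs) ?_
      rw [inv_smul_eq_iff]
      exact he.symm

lemma self_mem_sBall (S : ℕ) (x : Γ ⧸ H) : x ∈ sBall Q H S x :=
  ⟨SimpleGraph.Reachable.refl x, by simp [SimpleGraph.dist_self]⟩

lemma smul_eq_self_iff_mem_conjSub (g a : Γ) :
    g • (QuotientGroup.mk a : Γ ⧸ H) = QuotientGroup.mk a ↔ g ∈ conjSub a H := by
  have h1 : g • (QuotientGroup.mk a : Γ ⧸ H) = QuotientGroup.mk (g * a) := rfl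
  rw [h1, QuotientGroup.eq, mem_conjSub]
  have : (g * a)⁻¹ * a = (a⁻¹ * g * a)⁻¹ := by group
  rw [this, inv_mem_iff]

lemma smul_smul_conj_iff (g γ : Γ) (x : Γ ⧸ H) :
    g • (γ • x) = γ • x ↔ (γ⁻¹ * g * γ) • x = x := by
  have key : γ • ((γ⁻¹ * g * γ) • x) = g • (γ • x) := by
    rw [← mul_smul, ← mul_smul]
    congr 1
    group
  constructor
  · intro h
    have : γ • ((γ⁻¹ * g * γ) • x) = γ • x := by rw [key, h]
    exact smul_left_cancel γ this
  · intro h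
    rw [← key, h]

lemma ballIso_smul_eq (S : ℕ) {x y : Γ ⧸ H} (hiso : BallIso Q H H S x y)
    (l : List Γ) (hl : ∀ s ∈ l, s ∈ Q) (hlen : l.length ≤ S) :
    (l.prod • x = x ↔ l.prod • y = y) := by
  obtain ⟨φ, hbij, hroot, hlab⟩ := hiso
  have hball : ∀ (l' : List Γ), (∀ s ∈ l', s ∈ Q) → l'.length ≤ S →
      l'.prod • x ∈ sBall Q H S x := by
    intro l' hl' hlen'
    obtain ⟨p, hp⟩ := walk_of_list Q H l' hl' x
    exact ⟨p.reachable, le_trans (SimpleGraph.dist_le p) (hp.trans hlen')⟩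
  have key : ∀ (l' : List Γ), (∀ s ∈ l', s ∈ Q) → l'.length ≤ S →
      φ (l'.prod • x) = l'.prod • y := by
    intro l' hl' hlen'
    induction l' with
    | nil => simpa using hroot
    | cons s l' ih =>
      have hmem : ∀ t ∈ l', t ∈ Q := fun t ht => hl' t (by simp [ht])
      have hlen'' : l'.length ≤ S := by simp at hlen'; omega
      have hu := hball l' hmem hlen''
      have hv := hball (s :: l') hl' hlen'
      have heq : s • (l'.prod • x) = (s :: l').prod • x := by
        rw [List.prod_cons, mul_smul]
      have hs' := (hlab s (hl' s (by simp)) _ hu _ hv).mp heq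
      rw [ih hmem hlen''] at hs'
      rw [← hs', List.prod_cons, mul_smul]
  constructor
  · intro h
    have hk := key l hl hlen
    rw [h, hroot] at hk
    exact hk.symm
  · intro h
    have hk := key l hl hlen
    rw [h, ← hroot] at hk
    exact hbij.injOn (hball l hl hlen) (self_mem_sBall Q H S x) hk

end Graph

section Rho
variable {Γ : Type*} [Group Γ]

lemma conjSub_one (H : Subgroup Γ) : conjSub 1 H = H := by
  ext g
  rw [mem_conjSub]
  simp

def rightTransl (H : Subgroup Γ) (γ : Γ) (hconj : conjSub γ H = H) :
    Γ ⧸ H → Γ ⧸ H :=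
  Quotient.map' (fun b => b * γ) (by
    intro a b h
    rw [QuotientGroup.leftRel_apply] at h ⊢
    have h' : a⁻¹ * b ∈ conjSub γ H := by rw [hconj]; exact h
    have hm := mem_conjSub.mp h'
    convert hm using 1
    group)

lemma rightTransl_mk (H : Subgroup Γ) (γ : Γ) (hconj : conjSub γ H = H) (b : Γ) :
    rightTransl H γ hconj (QuotientGroup.mk b) = QuotientGroup.mk (b * γ) := rfl

lemma rightTransl_smul (H : Subgroup Γ) (γ : Γ) (hconj : conjSub γ H = H) (s : Γ) (z : Γ ⧸ H) :
    rightTransl H γ hconj (s • z) = s • rightTransl H γ hconj z := by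
  induction z using QuotientGroup.induction_on with
  | H b =>
    show QuotientGroup.mk (s * b * γ) = QuotientGroup.mk (s * (b * γ))
    rw [mul_assoc]

lemma ballIso_of_equivariant (Q : Finset Γ) (H : Subgroup Γ) {ρ ρ' : Γ ⧸ H → Γ ⧸ H}
    (hcom : ∀ (s : Γ) z, ρ (s • z) = s • ρ z)
    (hcom' : ∀ (s : Γ) z, ρ' (s • z) = s • ρ' z)
    (hli : Function.LeftInverse ρ' ρ) (hri : Function.RightInverse ρ' ρ)
    (S : ℕ) (x : Γ ⧸ H) : BallIso Q H H S x (ρ x) := by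
  have hinj : Function.Injective ρ := hli.injective
  have hinj' : Function.Injective ρ' := hri.injective
  have hadj : ∀ (σ : Γ ⧸ H → Γ ⧸ H), (∀ (s : Γ) z, σ (s • z) = s • σ z) →
      Function.Injective σ →
      ∀ {u v : Γ ⧸ H}, (schreierGraph Q H).Adj u v → (schreierGraph Q H).Adj (σ u) (σ v) := by
    rintro σ hc hi u v ⟨hne, s, hs, hcase⟩
    refine ⟨fun e => hne (hi e), s, hs, ?_⟩
    rcases hcase with h | h
    · left; rw [← hc, h]
    · right; rw [← hc, h]
  have hballmap : ∀ (σ : Γ ⧸ H → Γ ⧸ H), (∀ (s : Γ) z, σ (s • z) = s • σ z) →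
      Function.Injective σ →
      ∀ (w z : Γ ⧸ H), z ∈ sBall Q H S w → σ z ∈ sBall Q H S (σ w) := by
    rintro σ hc hi w z ⟨hr, hd⟩
    obtain ⟨p, hp⟩ := hr.exists_walk_length_eq_dist
    obtain ⟨q, hq⟩ : ∃ q : (schreierGraph Q H).Walk (σ w) (σ z), q.length = p.length :=
      ⟨p.map ⟨σ, fun h => hadj σ hc hi h⟩, SimpleGraph.Walk.length_map _ _⟩
    refine ⟨q.reachable, ?_⟩
    calc (schreierGraph Q H).dist (σ w) (σ z) ≤ q.length := SimpleGraph.dist_le _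
      _ = p.length := hq
      _ ≤ S := by rw [hp]; exact hd
  refine ⟨ρ, ⟨fun z hz => hballmap ρ hcom hinj x z hz, hinj.injOn, ?_⟩, rfl, ?_⟩
  · intro w hw
    refine ⟨ρ' w, ?_, hri w⟩
    have := hballmap ρ' hcom' hinj' (ρ x) w hw
    rwa [hli x] at this
  · intro s _ u _ v _
    constructor
    · intro e
      rw [← hcom, e]
    · intro e
      apply hinj
      rw [hcom, e]
end Rho

/-- a URS `Z` is generic (all members self-normalizing) iff for every `R > 0`
there is `S > 0` such that for every `H ∈ Z`, distinct vertices of `Γ/H` at distance at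
most `R` have non-isomorphic rooted-labeled `S`-balls. -/
theorem generic_iff_ball_separation
    {Γ : Type*} [Group Γ] (Q : Finset Γ)
    (hgen : Subgroup.closure (Q : Set Γ) = ⊤)
    (hsym : ∀ s ∈ Q, s⁻¹ ∈ Q)
    (Z : Set (Subgroup Γ)) (hZ : IsURS Z) :
    (∀ H ∈ Z, ∀ γ : Γ, conjSub γ H = H → γ ∈ H) ↔
    (∀ R : ℕ, 0 < R → ∃ S : ℕ, 0 < S ∧
      ∀ H ∈ Z, ∀ x y : Γ ⧸ H, x ≠ y → y ∈ sBall Q H R x → ¬ BallIso Q H H S x y) := by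
  constructor
  · -- generic → separation
    intro hgeneric R _hR
    by_contra hcon
    push_neg at hcon
    obtain ⟨hfail⟩ : Nonempty (∀ S : ℕ, 0 < S → ∃ H ∈ Z, ∃ x y : Γ ⧸ H,
        x ≠ y ∧ y ∈ sBall Q H R x ∧ BallIso Q H H S x y) := by
      refine ⟨fun S hS => ?_⟩
      obtain ⟨H, hH, x, y, hxy, hball, hiso⟩ := hcon S hS
      exact ⟨H, hH, x, y, hxy, hball, hiso⟩
    choose Hf hHf xf yf hne hball hiso using fun n : ℕ => hfail (n + 1) (Nat.succ_pos n)
    -- stabilizer subgroups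
    set K : ℕ → Subgroup Γ := fun n => conjSub (xf n).out (Hf n) with hKdef
    have hKZ : ∀ n, K n ∈ Z := fun n => hZ.invariant _ _ (hHf n)
    have hxout : ∀ n, QuotientGroup.mk (xf n).out = xf n := fun n => QuotientGroup.out_eq' _
    have hstab : ∀ n (g : Γ), g • (xf n) = xf n ↔ g ∈ K n := by
      intro n g
      rw [← hxout n, smul_eq_self_iff_mem_conjSub]
    have key : ∀ n : ℕ, ∃ g ∈ QWords Q R, g ∉ K n ∧
        ∀ h ∈ QWords Q (n + 1), (h ∈ K n ↔ g⁻¹ * h * g ∈ K n) := by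
      intro n
      obtain ⟨hr, hd⟩ := hball n
      obtain ⟨p, hp⟩ := hr.exists_walk_length_eq_dist
      obtain ⟨l, hl, hlen, hprod⟩ := list_of_walk Q (Hf n) hsym p
      refine ⟨l.prod, ⟨l, hl, hlen.trans (by rw [hp]; exact hd), rfl⟩, ?_, ?_⟩
      · intro hmem
        exact hne n (by rw [← (hstab n l.prod).mpr hmem, hprod])
      · rintro h ⟨l', hl', hlen', rfl⟩
        have hiff := ballIso_smul_eq Q (Hf n) (n + 1) (hiso n) l' hl' hlen'
        rw [hstab n] at hiff
        rw [hiff, ← hprod, smul_smul_conj_iff, hstab n]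
    choose γf hγmem hγnot hγcond using key
    -- pigeonhole
    haveI : Finite ↥(QWords Q R) := (QWords_finite Q R).to_subtype
    obtain ⟨y0, hy0⟩ := Finite.exists_infinite_fiber
      (fun n : ℕ => (⟨γf n, hγmem n⟩ : ↥(QWords Q R)))
    set γ0 : Γ := (y0 : Γ) with hγ0def
    have hA : {n : ℕ | γf n = γ0}.Infinite := by
      have : ((fun n : ℕ => (⟨γf n, hγmem n⟩ : ↥(QWords Q R))) ⁻¹' {y0}).Infinite :=
        Set.infinite_coe_iff.mp hy0
      refine this.mono ?_
      intro n hn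
      have : (⟨γf n, hγmem n⟩ : ↥(QWords Q R)) = y0 := hn
      exact congrArg Subtype.val this
    -- nested closed sets
    set C : ℕ → Set (Subgroup Γ) := fun m =>
      {L | L ∈ Z ∧ γ0 ∉ L ∧ ∀ h ∈ QWords Q (m + 1), (h ∈ L ↔ γ0⁻¹ * h * γ0 ∈ L)} with hCdef
    have hCclosed : ∀ m, IsClosed (C m) := by
      intro m
      have hCeq : C m = Z ∩ ({L : Subgroup Γ | γ0 ∉ L} ∩
          ⋂ (h : Γ), ⋂ (_ : h ∈ QWords Q (m + 1)),
            (({L : Subgroup Γ | h ∈ L} ∩ {L | γ0⁻¹ * h * γ0 ∈ L}) ∪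
             ({L : Subgroup Γ | h ∉ L} ∩ {L | γ0⁻¹ * h * γ0 ∉ L}))) := by
        ext L
        simp only [hCdef, Set.mem_setOf_eq, Set.mem_inter_iff, Set.mem_iInter,
          Set.mem_union]
        constructor
        · rintro ⟨h1, h2, h3⟩
          refine ⟨h1, h2, fun g hg => ?_⟩
          have := h3 g hg
          tauto
        · rintro ⟨h1, h2, h3⟩
          refine ⟨h1, h2, fun g hg => ?_⟩
          have := h3 g hg
          tauto
      rw [hCeq]
      refine hZ.closed.inter ((isClosed_notMemSet γ0).inter ?_)
      refine isClosed_iInter fun g => isClosed_iInter fun _ => ?_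
      exact ((isClosed_memSet g).inter (isClosed_memSet _)).union
        ((isClosed_notMemSet g).inter (isClosed_notMemSet _))
    have hCdec : ∀ m, C (m + 1) ⊆ C m := by
      rintro m L ⟨h1, h2, h3⟩
      exact ⟨h1, h2, fun g hg => h3 g (QWords_mono Q (by omega) hg)⟩
    have hCne : ∀ m, (C m).Nonempty := by
      intro m
      obtain ⟨n, hnA, hmn⟩ := hA.exists_gt m
      refine ⟨K n, hKZ n, ?_, ?_⟩
      · rw [← hnA]; exact hγnot n
      · intro g hg
        rw [← hnA]
        exact hγcond n g (QWords_mono Q (by omega) hg)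
    obtain ⟨L, hL⟩ := IsCompact.nonempty_iInter_of_sequence_nonempty_isCompact_isClosed
      C hCdec hCne ((hCclosed 0).isCompact) hCclosed
    have hLZ : L ∈ Z := (Set.mem_iInter.1 hL 0).1
    have hLγ : γ0 ∉ L := (Set.mem_iInter.1 hL 0).2.1
    have hLconj : conjSub γ0 L = L := by
      ext g
      rw [mem_conjSub]
      obtain ⟨n, hn⟩ := exists_QWords Q hgen hsym g
      exact ((Set.mem_iInter.1 hL n).2.2 g (QWords_mono Q (by omega) hn)).symm
    exact hLγ (hgeneric L hLZ γ0 hLconj)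
  · -- separation → generic
    intro hsep H hH γ hconj
    by_contra hγ
    have hconj' : conjSub γ⁻¹ H = H := by
      calc conjSub γ⁻¹ H = conjSub γ⁻¹ (conjSub γ H) := by rw [hconj]
        _ = conjSub (γ⁻¹ * γ) H := conjSub_conjSub
        _ = conjSub 1 H := by rw [inv_mul_cancel]
        _ = H := conjSub_one H
    set ρ : Γ ⧸ H → Γ ⧸ H := rightTransl H γ hconj with hρdef
    set ρ' : Γ ⧸ H → Γ ⧸ H := rightTransl H γ⁻¹ hconj' with hρ'def
    have hli : Function.LeftInverse ρ' ρ := by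
      intro z
      induction z using QuotientGroup.induction_on with
      | H b =>
        show QuotientGroup.mk (b * γ * γ⁻¹) = QuotientGroup.mk b
        rw [mul_inv_cancel_right]
    have hri : Function.RightInverse ρ' ρ := by
      intro z
      induction z using QuotientGroup.induction_on with
      | H b =>
        show QuotientGroup.mk (b * γ⁻¹ * γ) = QuotientGroup.mk b
        rw [inv_mul_cancel_right]
    set x : Γ ⧸ H := QuotientGroup.mk 1 with hxdef
    set y : Γ ⧸ H := ρ x with hydef
    have hxy : x ≠ y := by
      intro e
      have : (1 : Γ)⁻¹ * (1 * γ) ∈ H := QuotientGroup.eq.mp e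
      apply hγ
      simpa using this
    have hyx : γ • x = y := by
      show QuotientGroup.mk (γ * 1) = QuotientGroup.mk (1 * γ)
      rw [mul_one, one_mul]
    have hreach : (schreierGraph Q H).Reachable x y := by
      obtain ⟨n, l, hl, _, hprodeq⟩ := exists_QWords Q hgen hsym γ
      obtain ⟨p, _⟩ := walk_of_list Q H l hl x
      exact (p.copy rfl (by rw [hprodeq, hyx])).reachable
    have hRpos : 0 < (schreierGraph Q H).dist x y := hreach.pos_dist_of_ne hxy
    obtain ⟨S, _, hsep'⟩ := hsep _ hRpos
    refine hsep' H hH x y hxy ⟨hreach, le_refl _⟩ ?_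
    exact ballIso_of_equivariant Q H (rightTransl_smul H γ hconj)
      (rightTransl_smul H γ⁻¹ hconj') hli hri S x
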